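/- Let k be an algebraically closed field, S a commutative ring which is a k-algebra, and I ⊆ S[t] an ideal (or k[t]-submodule). Set I_0 = I ∩ S. If for every λ ∈ k one has (t−λ)S[t] ∩ I ⊆ (t−λ)I + I_0·S[t], then S[t]/I is a flat (equivalently, torsion-free) k[t]-module. -/

import Mathlib

open Polynomial
open scoped TensorProduct

/-- The `k[t]`-algebra structure on `S[t]` induced by `k → S`. -/
noncomputable instance polyAlg (k S : Type*) [Field k] [CommRing S] [Algebra k S] :
    Algebra (Polynomial k) (Polynomial S) :=
  (Polynomial.mapRingHom (algebraMap k S)).toAlgebra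

/-- Cancellation of a monic linear factor modulo an ideal of constants. -/
theorem linear_cancel_constants {S : Type*} [CommRing S] (I0 : Ideal S) (s : S)
    (z : Polynomial S) (hz : (X - C s) * z ∈ Ideal.map (Polynomial.C) I0) :
    z ∈ Ideal.map (Polynomial.C) I0 := by
  have hker : Ideal.map (Polynomial.C) I0
      = RingHom.ker (Polynomial.mapRingHom (Ideal.Quotient.mk I0)) := by
    rw [Polynomial.ker_mapRingHom, Ideal.mk_ker]
  rw [hker, RingHom.mem_ker] at hz ⊢
  rw [map_mul] at hz
  have hmonic : (Polynomial.mapRingHom (Ideal.Quotient.mk I0) (X - C s)).Monic := by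
    simpa using (monic_X_sub_C s).map (Ideal.Quotient.mk I0)
  have := hmonic.isRegular.left
  apply this
  simpa using hz

/-- Flatness criterion.  Let `k` be an algebraically closed field, `S` a commutative
`k`-algebra and `I ⊆ S[t]` an ideal with `I₀ = I ∩ S` (the constants lying in `I`).
If for every `λ ∈ k` one has `(t - λ)S[t] ∩ I ⊆ (t - λ)·I + I₀·S[t]`, then `S[t]/I` is a
flat (equivalently torsion-free) `k[t]`-module. -/
theorem flat_of_linear_factor_condition (k S : Type*) [Field k] [IsAlgClosed k]
    [CommRing S] [Algebra k S] (I : Ideal (Polynomial S))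
    (h : ∀ (lam : k) (x : Polynomial S), x ∈ I →
      (X - C (algebraMap k S lam)) ∣ x →
      ∃ i ∈ I, ∃ j ∈ Ideal.map (Polynomial.C) (Ideal.comap (Polynomial.C) I),
        x = (X - C (algebraMap k S lam)) * i + j) :
    Module.Flat (Polynomial k) (Polynomial S ⧸ I) := by
  classical
  set R := Polynomial k
  set M := Polynomial S ⧸ I
  -- Step B: cancelling a single linear factor in I
  have hB : ∀ (a : k) (x : Polynomial S),
      (X - C (algebraMap k S a)) * x ∈ I → x ∈ I := by
    intro a x hx
    obtain ⟨i, hi, j, hj, heq⟩ := h a _ hx (dvd_mul_right _ _)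
    have hsub : (X - C (algebraMap k S a)) * (x - i) = j := by ring_nf; linear_combination heq
    have hxi : x - i ∈ Ideal.map (Polynomial.C) (Ideal.comap (Polynomial.C) I) :=
      linear_cancel_constants _ _ _ (hsub ▸ hj)
    have hxi' : x - i ∈ I := Ideal.map_comap_le hxi
    have : i + (x - i) ∈ I := I.add_mem hi hxi'
    simpa using this
  -- Step C: cancelling any nonzero polynomial of k[t]
  have hC : ∀ (n : ℕ) (p : Polynomial k), p.natDegree ≤ n → p ≠ 0 →
      ∀ x : Polynomial S, p.map (algebraMap k S) * x ∈ I → x ∈ I := by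
    intro n
    induction n with
    | zero =>
      intro p hdeg hp x hx
      obtain ⟨c, rfl⟩ := Polynomial.natDegree_eq_zero.mp (Nat.le_zero.mp hdeg)
      have hc : c ≠ 0 := fun hc => hp (by simp [hc])
      have hunit : algebraMap k S c⁻¹ * algebraMap k S c = 1 := by
        rw [← map_mul, inv_mul_cancel₀ hc, map_one]
      have : C (algebraMap k S c⁻¹) * ((C c).map (algebraMap k S) * x) ∈ I :=
        I.mul_mem_left _ hx
      rw [Polynomial.map_C, ← mul_assoc, ← C_mul, hunit] at this
      simpa using this
    | succ n ih =>
      intro p hdeg hp x hx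
      by_cases hd : p.natDegree ≤ n
      · exact ih p hd hp x hx
      · have hdeg1 : p.degree ≠ 0 := by
          intro h0
          have h1 : p.natDegree = 0 := Polynomial.natDegree_eq_zero_iff_degree_le_zero.mpr h0.le
          omega
        obtain ⟨a, ha⟩ := IsAlgClosed.exists_root p hdeg1
        obtain ⟨q, hq⟩ := (Polynomial.dvd_iff_isRoot.mpr ha)
        have hq0 : q ≠ 0 := by
          rintro rfl; exact hp (by simp [hq])
        have hXa : (X - C a : Polynomial k) ≠ 0 := Polynomial.X_sub_C_ne_zero a
        have hqdeg : q.natDegree ≤ n := by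
          have := Polynomial.natDegree_mul hXa hq0
          rw [← hq] at this
          have h1 : (X - C a : Polynomial k).natDegree = 1 := Polynomial.natDegree_X_sub_C a
          omega
        have hmap : p.map (algebraMap k S)
            = (X - C (algebraMap k S a)) * q.map (algebraMap k S) := by
          rw [hq, Polynomial.map_mul]
          simp
        rw [hmap, mul_assoc] at hx
        exact ih q hqdeg hq0 x (hB a _ hx)
  -- the scalar action on the quotient
  have hsm : ∀ (q : Polynomial k) (x : Polynomial S),
      q • (Ideal.Quotient.mk I x) = Ideal.Quotient.mk I (q.map (algebraMap k S) * x) := by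
    intro q x
    have h1 : (Ideal.Quotient.mk I x) = Submodule.Quotient.mk x := rfl
    rw [h1, ← Submodule.Quotient.mk_smul]
    rfl
  -- torsion-freeness: smul by nonzero p is injective on M
  have hsmul : ∀ p : R, p ≠ 0 → Function.Injective (fun m : M => p • m) := by
    intro p hp m1 m2 hm
    obtain ⟨x, rfl⟩ := Ideal.Quotient.mk_surjective m1
    obtain ⟨y, rfl⟩ := Ideal.Quotient.mk_surjective m2
    simp only [hsm] at hm
    rw [Ideal.Quotient.mk_eq_mk_iff_sub_mem] at hm ⊢
    have : p.map (algebraMap k S) * (x - y) ∈ I := by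
      have heq : p.map (algebraMap k S) * x - p.map (algebraMap k S) * y
          = p.map (algebraMap k S) * (x - y) := by ring
      rwa [heq] at hm
    exact hC p.natDegree p le_rfl hp _ this
  rw [Module.Flat.iff_rTensor_injective']
  intro J
  obtain ⟨p, hJ⟩ := (IsPrincipalIdealRing.principal J)
  by_cases hp : p = 0
  · -- J = ⊥, the tensor product is trivial
    rw [hp, Submodule.span_zero_singleton] at hJ
    subst hJ
    have hz : ∀ z : (⊥ : Ideal R) ⊗[R] M, z = 0 := by
      intro z
      induction z using TensorProduct.induction_on with
      | zero => rfl
      | tmul j m =>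
        have : j = 0 := Subtype.ext (by simpa using (Submodule.mem_bot R).mp j.2)
        rw [this]
        simp
      | add x y hx hy => rw [hx, hy]; simp
    intro a b _
    rw [hz a, hz b]
  · -- J = span {p}, p ≠ 0
    subst hJ
    set e := LinearEquiv.toSpanNonzeroSingleton R R p hp with he
    set f := LinearMap.toSpanSingleton R R p with hf
    have hfe : (Submodule.span R {p}).subtype ∘ₗ (e : R →ₗ[R] Submodule.span R {p}) = f :=
      LinearMap.ext fun z => rfl
    -- injectivity of rTensor f
    have hcomp : (TensorProduct.lid R M).toLinearMap ∘ₗ LinearMap.rTensor M f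
        = (LinearMap.lsmul R M p) ∘ₗ (TensorProduct.lid R M).toLinearMap := by
      apply TensorProduct.ext'
      intro x m
      simp [hf, smul_smul, mul_comm]
    have hfinj : Function.Injective (LinearMap.rTensor M f) := by
      have h1 : Function.Injective
          (⇑(TensorProduct.lid R M).toLinearMap ∘ ⇑(LinearMap.rTensor M f)) := by
        rw [← LinearMap.coe_comp, hcomp, LinearMap.coe_comp]
        exact Function.Injective.comp (hsmul p hp) (TensorProduct.lid R M).injective
      exact Function.Injective.of_comp h1
    -- surjectivity of rTensor e
    have hesurj : Function.Surjective
        (LinearMap.rTensor M (e : R →ₗ[R] Submodule.span R {p})) := by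
      intro z
      induction z using TensorProduct.induction_on with
      | zero => exact ⟨0, map_zero _⟩
      | tmul j m =>
        exact ⟨e.symm j ⊗ₜ m,
          by rw [LinearMap.rTensor_tmul, LinearEquiv.coe_coe, LinearEquiv.apply_symm_apply]⟩
      | add x y hx hy =>
        obtain ⟨x', hx'⟩ := hx
        obtain ⟨y', hy'⟩ := hy
        exact ⟨x' + y', by rw [map_add, hx', hy']⟩
    intro z w hzw
    obtain ⟨z', rfl⟩ := hesurj z
    obtain ⟨w', rfl⟩ := hesurj w
    have : LinearMap.rTensor M f z' = LinearMap.rTensor M f w' := by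
      rw [← hfe, LinearMap.rTensor_comp]
      exact hzw
    rw [hfinj this]
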